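/- (Inexact oracle) Fix λ_k ∈ ℝᵖ and let x*_k ∈ X minimize L_ρ(·;λ_k) over X. Assume: (i) x̃_k ∈ X satisfies L_ρ(x̃_k;λ_k) − L_ρ(x*_k;λ_k) ≤ ε_in^k with 0 ≤ ε_in^k ≤ B_in; (ii) ε_out^k ∈ ℝᵖ satisfies ‖ε_out^k‖ ≤ B_out; (iii) D_δ ⊆ ℝᵖ contains λ_k and ‖λ₁ − λ₂‖ ≤ B_λ for all λ₁, λ₂ ∈ D_δ; (iv) Φ_ρ is concave and differentiable with ∇Φ_ρ(λ_k) = A x*_k − b, and Φ_ρ(λ) ≥ Φ_ρ(λ_k) + ⟨∇Φ_ρ(λ_k), λ − λ_k⟩ − (1/(2ρ))‖λ − λ_k‖² for all λ ∈ ℝᵖ. Define Φ_{δ,L}(λ_k) = L_ρ(x̃_k;λ_k) + B_out·B_λ, s_{δ,L}(λ_k) = A x̃_k − b + ε_out^k, L = 2/ρ, and δ = 2B_in + 2B_out·B_λ. Then for every λ ∈ D_δ: 0 ≥ Φ_ρ(λ) − (Φ_{δ,L}(λ_k) + ⟨s_{δ,L}(λ_k), λ − λ_k⟩) ≥ −(L/2)‖λ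 − λ_k‖² − δ. -/

import Mathlib

open RealInnerProductSpace

lemma norm_combo_sq {E : Type*} [NormedAddCommGroup E] [InnerProductSpace ℝ E]
    (u v : E) (t : ℝ) :
    ‖(1-t) • u + t • v‖ ^ 2
      = (1-t) * ‖u‖ ^ 2 + t * ‖v‖ ^ 2 - t * (1-t) * ‖u - v‖ ^ 2 := by
  rw [norm_add_sq_real, norm_sub_sq_real, norm_smul, norm_smul,
      real_inner_smul_left, real_inner_smul_right]
  simp only [Real.norm_eq_abs, mul_pow, sq_abs]
  ring

lemma amgm_aux (ρ T d : ℝ) (hρ : 0 < ρ) :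
    d * T ≤ 1 / (2 * ρ) * T ^ 2 + ρ / 2 * d ^ 2 := by
  have hρ2 : (0:ℝ) < 2 * ρ := by linarith
  have h2 : (2 * ρ) * (d * T) ≤ (2 * ρ) * (1 / (2 * ρ) * T ^ 2 + ρ / 2 * d ^ 2) := by
    have he : (2 * ρ) * (1 / (2 * ρ) * T ^ 2) = T ^ 2 := by field_simp
    rw [mul_add, he]
    nlinarith [sq_nonneg (T - ρ * d)]
  exact le_of_mul_le_mul_left h2 hρ2

lemma coef_aux (ρ T : ℝ) (hρ : ρ ≠ 0) :
    -(2 / ρ / 2) * T ^ 2 = -(1 / (2 * ρ) * T ^ 2) - 1 / (2 * ρ) * T ^ 2 := by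
  field_simp
  ring

/-- the inexact oracle property (Lemma 1). -/
theorem inexact_oracle
    (n p : ℕ)
    (f : EuclideanSpace ℝ (Fin n) → ℝ)
    (hf : ConvexOn ℝ Set.univ f)
    (X : Set (EuclideanSpace ℝ (Fin n)))
    (hXne : X.Nonempty) (hXcompact : IsCompact X) (hXconvex : Convex ℝ X)
    (A : EuclideanSpace ℝ (Fin n) →ₗ[ℝ] EuclideanSpace ℝ (Fin p))
    (b : EuclideanSpace ℝ (Fin p))
    (ρ : ℝ) (hρ : 0 < ρ)
    (Lρ : EuclideanSpace ℝ (Fin n) → EuclideanSpace ℝ (Fin p) → ℝ)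
    (hLρ : ∀ x μ, Lρ x μ = f x + ⟪A x - b, μ⟫ + ρ / 2 * ‖A x - b‖ ^ 2)
    -- the augmented dual function `Φ μ = min_{x ∈ X} Lρ(x; μ)`
    (Φ : EuclideanSpace ℝ (Fin p) → ℝ)
    (hΦ : ∀ μ, ∃ x ∈ X, Lρ x μ = Φ μ ∧ ∀ y ∈ X, Φ μ ≤ Lρ y μ)
    (lamk : EuclideanSpace ℝ (Fin p))
    -- (the exact minimizer `x*_k` of `Lρ(·; λ_k)` over `X`)
    (xk : EuclideanSpace ℝ (Fin n)) (hxk : xk ∈ X)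
    (hxkmin : ∀ x ∈ X, Lρ xk lamk ≤ Lρ x lamk)
    -- (i) the inexact primal update `x̃_k`
    (xt : EuclideanSpace ℝ (Fin n)) (hxt : xt ∈ X)
    (εin Bin : ℝ)
    (hxtapprox : Lρ xt lamk - Lρ xk lamk ≤ εin)
    (hεin_nonneg : 0 ≤ εin) (hεin_le : εin ≤ Bin)
    -- (ii) the dual error `ε_out^k`
    (εout : EuclideanSpace ℝ (Fin p)) (Bout : ℝ) (hεout : ‖εout‖ ≤ Bout)
    -- (iii) the set `D_δ`
    (Dδ : Set (EuclideanSpace ℝ (Fin p))) (Blam : ℝ)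
    (hlamk_mem : lamk ∈ Dδ)
    (hDδ_diam : ∀ l₁ ∈ Dδ, ∀ l₂ ∈ Dδ, ‖l₁ - l₂‖ ≤ Blam)
    -- (iv) concavity and smoothness of `Φ`
    (hconc : ConcaveOn ℝ Set.univ Φ)
    (hgrad : HasGradientAt Φ (A xk - b) lamk)
    (hlower : ∀ lam, Φ lam ≥
      Φ lamk + ⟪A xk - b, lam - lamk⟫ - 1 / (2 * ρ) * ‖lam - lamk‖ ^ 2) :
    ∀ lam ∈ Dδ,
      0 ≥ Φ lam -
          ((Lρ xt lamk + Bout * Blam) + ⟪A xt - b + εout, lam - lamk⟫) ∧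
      Φ lam - ((Lρ xt lamk + Bout * Blam) + ⟪A xt - b + εout, lam - lamk⟫) ≥
        -(2 / ρ / 2) * ‖lam - lamk‖ ^ 2 - (2 * Bin + 2 * Bout * Blam) := by
  have hBlam0 : 0 ≤ Blam := by
    have := hDδ_diam lamk hlamk_mem lamk hlamk_mem
    simpa using this
  have hBout0 : 0 ≤ Bout := le_trans (norm_nonneg _) hεout
  -- Φ lamk = Lρ xk lamk
  obtain ⟨x0, hx0X, hx0eq, hx0min⟩ := hΦ lamk
  have hΦlamk : Φ lamk = Lρ xk lamk :=
    le_antisymm (hx0min xk hxk) (hx0eq ▸ hxkmin x0 hx0X)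
  -- Lρ is affine in the multiplier
  have haffine : ∀ x lam, Lρ x lam = Lρ x lamk + ⟪A x - b, lam - lamk⟫ := by
    intro x lam
    rw [hLρ, hLρ, inner_sub_right]
    ring
  -- key bound: ρ/2 ‖A xt - A xk‖² ≤ εin
  set d : ℝ := ‖A xt - A xk‖ with hd
  have hstep : ∀ t : ℝ, 0 < t → t < 1 → ρ / 2 * ((1 - t) * d ^ 2) ≤ εin := by
    intro t ht0 ht1
    set xm := (1 - t) • xk + t • xt with hxm
    have hxmX : xm ∈ X := hXconvex hxk hxt (by linarith) ht0.le (by ring)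
    have hAxm : A xm - b = (1 - t) • (A xk - b) + t • (A xt - b) := by
      simp only [hxm, map_add, map_smul, smul_sub]
      module
    have hfconv : f xm ≤ (1 - t) * f xk + t * f xt :=
      hf.2 (Set.mem_univ xk) (Set.mem_univ xt) (by linarith) ht0.le (by ring)
    have hinner : ⟪A xm - b, lamk⟫
        = (1 - t) * ⟪A xk - b, lamk⟫ + t * ⟪A xt - b, lamk⟫ := by
      rw [hAxm, inner_add_left, real_inner_smul_left, real_inner_smul_left]
    have hnorm : ‖A xm - b‖ ^ 2
        = (1 - t) * ‖A xk - b‖ ^ 2 + t * ‖A xt - b‖ ^ 2 - t * (1 - t) * d ^ 2 := by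
      rw [hAxm, norm_combo_sq]
      have h1 : (A xk - b) - (A xt - b) = A xk - A xt := by abel
      have h2 : ‖A xk - A xt‖ = d := by rw [hd, norm_sub_rev]
      rw [h1, h2]
    have hcomb : Lρ xm lamk
        ≤ (1 - t) * Lρ xk lamk + t * Lρ xt lamk - ρ / 2 * (t * (1 - t) * d ^ 2) := by
      rw [hLρ xm lamk, hLρ xk lamk, hLρ xt lamk, hinner, hnorm]
      nlinarith [hfconv]
    have hmin := hxkmin xm hxmX
    have h2 : t * (ρ / 2 * ((1 - t) * d ^ 2)) ≤ t * εin := by nlinarith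
    exact le_of_mul_le_mul_left h2 ht0
  have key : ρ / 2 * d ^ 2 ≤ εin := by
    by_contra h
    push_neg at h
    set c := ρ / 2 * d ^ 2 with hc
    have hc0 : 0 < c := lt_of_le_of_lt hεin_nonneg h
    set t := (c - εin) / (2 * c) with ht
    have ht0 : 0 < t := div_pos (by linarith) (by linarith)
    have ht1 : t < 1 := by
      rw [ht, div_lt_one (by linarith)]
      linarith
    have := hstep t ht0 ht1
    have htc : t * c = (c - εin) / 2 := by
      rw [ht]; field_simp
    nlinarith
  -- now fix lam
  intro lam hlam
  set T : ℝ := ‖lam - lamk‖ with hT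
  have hTBlam : T ≤ Blam := hDδ_diam lam hlam lamk hlamk_mem
  have hT0 : 0 ≤ T := norm_nonneg _
  have hεout_inner : |⟪εout, lam - lamk⟫| ≤ Bout * Blam :=
    le_trans (abs_real_inner_le_norm _ _)
      (mul_le_mul hεout hTBlam hT0 hBout0)
  have hsplit : ⟪A xt - b + εout, lam - lamk⟫
      = ⟪A xt - b, lam - lamk⟫ + ⟪εout, lam - lamk⟫ := inner_add_left _ _ _
  obtain ⟨habs1, habs2⟩ := abs_le.mp hεout_inner
  constructor
  · -- upper bound
    obtain ⟨x1, hx1X, hx1eq, hx1min⟩ := hΦ lam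
    have h1 : Φ lam ≤ Lρ xt lam := hx1min xt hxt
    rw [haffine xt lam] at h1
    rw [hsplit]
    linarith
  · -- lower bound
    have hlow := hlower lam
    have hsplit2 : ⟪A xk - b, lam - lamk⟫
        = ⟪A xt - b, lam - lamk⟫ + ⟪A xk - A xt, lam - lamk⟫ := by
      rw [← inner_add_left]
      congr 1
      abel
    have hinner3 : -(‖A xk - A xt‖ * T) ≤ ⟪A xk - A xt, lam - lamk⟫ := by
      have h := abs_real_inner_le_norm (A xk - A xt) (lam - lamk)
      exact (abs_le.mp h).1
    have hdd : ‖A xk - A xt‖ = d := by rw [hd, norm_sub_rev]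
    have hamgm : d * T ≤ 1 / (2 * ρ) * T ^ 2 + ρ / 2 * d ^ 2 := amgm_aux ρ T d hρ
    rw [hsplit2] at hlow
    rw [hdd] at hinner3
    rw [hsplit]
    rw [coef_aux ρ T (ne_of_gt hρ)]
    linarith
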